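/- Let π be a permutation of {1,…,n} and let σ be any permutation of {1,…,n} that agrees with χ_e(π) on the set {1,…,n}∖RT (the complement of the set of run tops of π) and satisfies σ(i) ≤ i for every i in RT. Then the set of global ascents of π equals the set of global ascents of σ. -/

import Mathlib

open Finset
open scoped Classical

variable {n : ℕ}

/-- `π` has a descent at (0-based) position `k`. -/
def IsDesc (π : Equiv.Perm (Fin n)) (k : ℕ) : Prop :=
  ∃ hk : k + 1 < n, π ⟨k + 1, hk⟩ < π ⟨k, Nat.lt_of_succ_lt hk⟩

/-- Positions `i ≤ j` lie in the same descending run of `π`: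
every step between them is a descent. -/
def SameRunLe (π : Equiv.Perm (Fin n)) (i j : Fin n) : Prop :=
  i ≤ j ∧ ∀ k : ℕ, i.val ≤ k → k < j.val → IsDesc π k

/-- The first position of the descending run containing position `p`. -/
noncomputable def runStartPos (π : Equiv.Perm (Fin n)) (p : Fin n) : Fin n :=
  (Finset.univ.filter fun a => SameRunLe π a p).min'
    ⟨p, Finset.mem_filter.mpr ⟨Finset.mem_univ p,
      le_refl p, fun k hk hk' => absurd hk' (Nat.not_lt.mpr hk)⟩⟩

/-- The last position of the descending run containing position `p`. -/
noncomputable def runEndPos (π : Equiv.Perm (Fin n)) (p : Fin n) : Fin n :=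
  (Finset.univ.filter fun b => SameRunLe π p b).max'
    ⟨p, Finset.mem_filter.mpr ⟨Finset.mem_univ p,
      le_refl p, fun k hk hk' => absurd hk' (Nat.not_lt.mpr hk)⟩⟩

/-- The run top (largest value) of the descending run of `π` containing the value `v`. -/
noncomputable def runTopVal (π : Equiv.Perm (Fin n)) (v : Fin n) : Fin n :=
  π (runStartPos π (π.symm v))

/-- The run bottom (smallest value) of the descending run of `π` containing the value `v`. -/
noncomputable def runBotVal (π : Equiv.Perm (Fin n)) (v : Fin n) : Fin n :=
  π (runEndPos π (π.symm v))

/-- The set of run tops of `π`. -/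
noncomputable def RT (π : Equiv.Perm (Fin n)) : Finset (Fin n) :=
  Finset.univ.filter fun v => runTopVal π v = v

/-- The set of run bottoms of `π`. -/
noncomputable def RB (π : Equiv.Perm (Fin n)) : Finset (Fin n) :=
  Finset.univ.filter fun v => runBotVal π v = v

/-- The descending run of `π` containing the value `v`, as a set of values. -/
noncomputable def runOf (π : Equiv.Perm (Fin n)) (v : Fin n) : Finset (Fin n) :=
  Finset.univ.filter fun w => runStartPos π (π.symm w) = runStartPos π (π.symm v)

/-- The set of descending runs of `π`, each run regarded as a set of values. -/
noncomputable def runsSet (π : Equiv.Perm (Fin n)) : Finset (Finset (Fin n)) :=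
  Finset.univ.image (runOf π)

/-- The set `31∗2(π)`: pairs `(i,j)` with `i+1 < j`, `π i > π j > π (i+1)`, and the run
bottom of the run containing `π i` (and `π (i+1)`) smaller than the run bottom of
the run containing `π j`. -/
noncomputable def Pat31s2 (π : Equiv.Perm (Fin n)) : Finset (Fin n × Fin n) :=
  Finset.univ.filter fun p => ∃ h : p.1.val + 1 < n,
    p.1.val + 1 < p.2.val ∧ π p.2 < π p.1 ∧ π ⟨p.1.val + 1, h⟩ < π p.2 ∧
    runBotVal π (π p.1) < runBotVal π (π p.2)

/-- The multiset of descent views of `π`. -/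
noncomputable def dvM (π : Equiv.Perm (Fin n)) : Multiset (Fin n) :=
  (Pat31s2 π).val.map fun p => π p.2

/-- Invisible inversions of `σ`: pairs `(i,j)` with `i < j` and `σ i > σ j > i`. -/
def invisibleInversions (σ : Equiv.Perm (Fin n)) : Finset (Fin n × Fin n) :=
  Finset.univ.filter fun p => p.1 < p.2 ∧ σ p.2 < σ p.1 ∧ p.1 < σ p.2

/-- The multiset of invisible inversion bottoms of `σ`. -/
def invInvBottoms (σ : Equiv.Perm (Fin n)) : Multiset (Fin n) :=
  (invisibleInversions σ).val.map fun p => σ p.2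

/-- The set of positions of weak deficiencies of `σ`. -/
def weakDefPos (σ : Equiv.Perm (Fin n)) : Finset (Fin n) :=
  Finset.univ.filter fun i => σ i ≤ i

/-- The set of values of weak deficiencies of `σ`. -/
def weakDefVals (σ : Equiv.Perm (Fin n)) : Finset (Fin n) :=
  (weakDefPos σ).image σ

/-- Global ascents of `π`, as 1-based indices `m ∈ {1,…,n}`: `π` restricted to the
first `m` positions is a permutation of the smallest `m` values. -/
def globalAscents (π : Equiv.Perm (Fin n)) : Finset ℕ :=
  (Finset.Icc 1 n).filter fun m => ∀ i : Fin n, i.val < m → (π i).val < m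

/-- The set of left-to-right maxima (as values) of `π`. -/
def lrMax (π : Equiv.Perm (Fin n)) : Finset (Fin n) :=
  Finset.univ.filter fun v => ∀ i : Fin n, i < π.symm v → π i < v

/-- The set of maximal elements of the cycles of `σ`. -/
noncomputable def cycleMaxes (σ : Equiv.Perm (Fin n)) : Finset (Fin n) :=
  Finset.univ.filter fun v => ∀ w : Fin n, σ.SameCycle v w → w ≤ v

/-- The one-line notation of `π` (0-based values). -/
def oneLine (π : Equiv.Perm (Fin n)) : List ℕ :=
  (List.finRange n).map fun i => (π i : ℕ)

/-- Helper for splitting a list into maximal ascending runs. -/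
def addRun (x : ℕ) : List (List ℕ) → List (List ℕ)
  | [] => [[x]]
  | [] :: rest => [x] :: rest
  | (y :: r) :: rest =>
      if x < y then (x :: y :: r) :: rest else [x] :: (y :: r) :: rest

/-- Split a list into its maximal ascending runs. -/
def splitAscRuns (l : List ℕ) : List (List ℕ) := l.foldr addRun []

/-- Sort the ascending runs of `l` in increasing order of their minimal (= first)
elements and concatenate. -/
def runsortL (l : List ℕ) : List ℕ :=
  ((splitAscRuns l).mergeSort fun r s => decide (r.headI ≤ s.headI)).flatten

/-- The number of occurrences of the vincular pattern `13-2` in the word `l`: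
pairs `(i,j)` with `i < j` and `l i < l j < l (i+1)`. -/
def occ132 (l : List ℕ) : ℕ :=
  ((Finset.range l.length ×ˢ Finset.range l.length).filter fun p =>
    p.1 < p.2 ∧ l.getD p.1 0 < l.getD p.2 0 ∧ l.getD p.2 0 < l.getD (p.1 + 1) 0).card

/-- The multiset of inversion bottoms of a bijection from `{1,…,n}∖RT` to `{1,…,n}∖RB`. -/
noncomputable def invBottomsE (π : Equiv.Perm (Fin n))
    (f : {x : Fin n // x ∉ RT π} ≃ {x : Fin n // x ∉ RB π}) : Multiset (Fin n) :=
  ((Finset.univ :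
      Finset ({x : Fin n // x ∉ RT π} × {x : Fin n // x ∉ RT π})).filter fun p =>
    (p.1 : Fin n) < (p.2 : Fin n) ∧ (f p.2 : Fin n) < (f p.1 : Fin n)).val.map
    fun p => (f p.2 : Fin n)

/-- The multiset of descent views of `π` which are not run bottoms. -/
noncomputable def dvNotRB (π : Equiv.Perm (Fin n)) : Multiset (Fin n) :=
  (dvM π).filter fun v => v ∉ RB π

/-- `f` is the bijection `χ_e(π)`: its multiset of inversion bottoms is the multiset of
descent views of `π` which are not run bottoms. -/
def IsChiE (π : Equiv.Perm (Fin n))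
    (f : {x : Fin n // x ∉ RT π} ≃ {x : Fin n // x ∉ RB π}) : Prop :=
  invBottomsE π f = dvNotRB π

/-- The graph of the partial bijection `f`. -/
noncomputable def chiEGraph (π : Equiv.Perm (Fin n))
    (f : {x : Fin n // x ∉ RT π} ≃ {x : Fin n // x ∉ RB π}) : Finset (Fin n × Fin n) :=
  Finset.univ.image fun x : {x : Fin n // x ∉ RT π} => ((x : Fin n), (f x : Fin n))

/-- The number of cycles (orbits) of `σ`. -/
noncomputable def numCycles (σ : Equiv.Perm (Fin n)) : ℕ :=
  σ.cycleType.card + (Finset.univ.filter fun v => σ v = v).card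


namespace Stmt7Aux

variable (π : Equiv.Perm (Fin n))

lemma sameRunLe_refl (p : Fin n) : SameRunLe π p p :=
  ⟨le_refl p, fun k hk hk' => absurd hk' (Nat.not_lt.mpr hk)⟩

lemma sameRunLe_trans {a b c : Fin n} (h1 : SameRunLe π a b) (h2 : SameRunLe π b c) :
    SameRunLe π a c := by
  refine ⟨le_trans h1.1 h2.1, fun k hk hk' => ?_⟩
  rcases lt_or_ge k b.val with h | h
  · exact h1.2 k hk h
  · exact h2.2 k h hk'

lemma sameRunLe_right {a b c : Fin n} (h : SameRunLe π a c) (hab : a ≤ b) (hbc : b ≤ c) :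
    SameRunLe π b c :=
  ⟨hbc, fun k hk hk' => h.2 k (le_trans hab hk) hk'⟩

lemma sameRunLe_left {a b c : Fin n} (h : SameRunLe π a c) (hab : a ≤ b) (hbc : b ≤ c) :
    SameRunLe π a b :=
  ⟨hab, fun k hk hk' => h.2 k hk (lt_of_lt_of_le hk' hbc)⟩

lemma mem_run_filter_start {a p : Fin n} :
    a ∈ Finset.univ.filter (fun x => SameRunLe π x p) ↔ SameRunLe π a p := by
  simp [Finset.mem_filter]

lemma mem_run_filter_end {a p : Fin n} :
    a ∈ Finset.univ.filter (fun x => SameRunLe π p x) ↔ SameRunLe π p a := by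
  simp [Finset.mem_filter]

lemma runStartPos_le_of {a p : Fin n} (h : SameRunLe π a p) : runStartPos π p ≤ a :=
  Finset.min'_le _ _ ((mem_run_filter_start π).mpr h)

lemma le_runEndPos_of {a p : Fin n} (h : SameRunLe π p a) : a ≤ runEndPos π p :=
  Finset.le_max' _ _ ((mem_run_filter_end π).mpr h)

lemma sameRunLe_runStartPos (p : Fin n) : SameRunLe π (runStartPos π p) p :=
  (mem_run_filter_start π).mp (Finset.min'_mem _ _)

lemma sameRunLe_runEndPos (p : Fin n) : SameRunLe π p (runEndPos π p) :=
  (mem_run_filter_end π).mp (Finset.max'_mem _ _)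

lemma runStartPos_le (p : Fin n) : runStartPos π p ≤ p :=
  runStartPos_le_of π (sameRunLe_refl π p)

lemma le_runEndPos (p : Fin n) : p ≤ runEndPos π p :=
  le_runEndPos_of π (sameRunLe_refl π p)

lemma runStartPos_eq {a b : Fin n} (h : SameRunLe π a b) :
    runStartPos π b = runStartPos π a := by
  apply le_antisymm
  · exact runStartPos_le_of π (sameRunLe_trans π (sameRunLe_runStartPos π a) h)
  · have hs : SameRunLe π (runStartPos π b) b := sameRunLe_runStartPos π b
    have hsa : runStartPos π b ≤ a := runStartPos_le_of π h
    exact runStartPos_le_of π (sameRunLe_left π hs hsa h.1)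

lemma runEndPos_eq {a b : Fin n} (h : SameRunLe π a b) :
    runEndPos π a = runEndPos π b := by
  apply le_antisymm
  · have hae : b ≤ runEndPos π a := le_runEndPos_of π h
    exact le_runEndPos_of π (sameRunLe_right π (sameRunLe_runEndPos π a) h.1 hae)
  · exact le_runEndPos_of π (sameRunLe_trans π h (sameRunLe_runEndPos π b))

lemma pi_sameRun_aux :
    ∀ (d : ℕ) (a b : Fin n), SameRunLe π a b → b.val = a.val + d →
      π b ≤ π a ∧ (0 < d → π b < π a) := by
  intro d
  induction d with
  | zero =>
    intro a b _ hb
    have : b = a := Fin.ext (by omega)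
    subst this
    exact ⟨le_rfl, fun h => absurd h (by omega)⟩
  | succ d ih =>
    intro a b h hb
    have hbn : a.val + d + 1 < n := by omega
    have hab' : a ≤ (⟨a.val + d, Nat.lt_of_succ_lt hbn⟩ : Fin n) := by
      simp [Fin.le_def]
    have hb'b : (⟨a.val + d, Nat.lt_of_succ_lt hbn⟩ : Fin n) ≤ b := by
      simp only [Fin.le_def]
      omega
    have hrun' : SameRunLe π a ⟨a.val + d, Nat.lt_of_succ_lt hbn⟩ :=
      sameRunLe_left π h hab' hb'b
    have hdesc : IsDesc π (a.val + d) := h.2 (a.val + d) (by omega) (by omega)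
    obtain ⟨hk, hlt⟩ := hdesc
    have hbeq : (⟨a.val + d + 1, hk⟩ : Fin n) = b :=
      Fin.ext (show a.val + d + 1 = b.val by omega)
    rw [hbeq] at hlt
    obtain ⟨h1, _⟩ := ih a ⟨a.val + d, Nat.lt_of_succ_lt hbn⟩ hrun' rfl
    exact ⟨le_of_lt (lt_of_lt_of_le hlt h1), fun _ => lt_of_lt_of_le hlt h1⟩

lemma pi_le_of_sameRun {a b : Fin n} (h : SameRunLe π a b) : π b ≤ π a :=
  (pi_sameRun_aux π (b.val - a.val) a b h
    (by have h' : a.val ≤ b.val := h.1; omega)).1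

lemma pi_lt_of_sameRun {a b : Fin n} (h : SameRunLe π a b) (hab : a < b) : π b < π a :=
  (pi_sameRun_aux π (b.val - a.val) a b h
    (by have h' : a.val ≤ b.val := h.1; omega)).2 (by
    have h2 : a.val < b.val := hab
    omega)

lemma runBotVal_le (v : Fin n) : runBotVal π v ≤ v := by
  have h := pi_le_of_sameRun π (sameRunLe_runEndPos π (π.symm v))
  simpa [runBotVal] using h

lemma le_runTopVal (v : Fin n) : v ≤ runTopVal π v := by
  have h := pi_le_of_sameRun π (sameRunLe_runStartPos π (π.symm v))
  simpa [runTopVal] using h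

lemma mem_RB_iff (v : Fin n) : v ∈ RB π ↔ runBotVal π v = v := by
  simp [RB]

lemma mem_RT_iff (v : Fin n) : v ∈ RT π ↔ runTopVal π v = v := by
  simp [RT]

lemma runBotVal_mem_RB (v : Fin n) : runBotVal π v ∈ RB π := by
  rw [mem_RB_iff]
  unfold runBotVal
  rw [Equiv.symm_apply_apply]
  congr 1
  exact (runEndPos_eq π (sameRunLe_runEndPos π (π.symm v))).symm

lemma runTopVal_mem_RT (v : Fin n) : runTopVal π v ∈ RT π := by
  rw [mem_RT_iff]
  unfold runTopVal
  rw [Equiv.symm_apply_apply]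
  congr 1
  exact (runStartPos_eq π (sameRunLe_runStartPos π (π.symm v))).symm

lemma runTopVal_runBotVal (v : Fin n) : runTopVal π (runBotVal π v) = runTopVal π v := by
  unfold runTopVal runBotVal
  rw [Equiv.symm_apply_apply]
  congr 1
  exact runStartPos_eq π (sameRunLe_runEndPos π (π.symm v))

lemma runBotVal_runTopVal (v : Fin n) : runBotVal π (runTopVal π v) = runBotVal π v := by
  unfold runTopVal runBotVal
  rw [Equiv.symm_apply_apply]
  congr 1
  exact runEndPos_eq π (sameRunLe_runStartPos π (π.symm v))

lemma sameRunLe_of_desc {i : Fin n} (hk : i.val + 1 < n) (hd : IsDesc π i.val) :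
    SameRunLe π i ⟨i.val + 1, hk⟩ := by
  refine ⟨by simp [Fin.le_def], fun k hk1 hk2 => ?_⟩
  have hk2' : k < i.val + 1 := hk2
  have hki : k = i.val := by omega
  rw [hki]
  exact hd

lemma not_mem_RB_of_desc {i : Fin n} (hd : IsDesc π i.val) : π i ∉ RB π := by
  obtain ⟨hk, -⟩ := id hd
  have hrun : SameRunLe π i ⟨i.val + 1, hk⟩ := sameRunLe_of_desc π hk hd
  have hend : i < runEndPos π i := by
    have h1 : (⟨i.val + 1, hk⟩ : Fin n) ≤ runEndPos π i := le_runEndPos_of π hrun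
    have h2 : i.val + 1 ≤ (runEndPos π i).val := h1
    exact Fin.lt_def.mpr (by omega)
  have hlt : π (runEndPos π i) < π i := pi_lt_of_sameRun π (sameRunLe_runEndPos π i) hend
  rw [mem_RB_iff]
  unfold runBotVal
  rw [Equiv.symm_apply_apply]
  exact ne_of_lt hlt

/-- If `π` maps positions `< m` to values `< m`, the converse also holds. -/
lemma ga_pos_of_val (m : ℕ) (hGA : ∀ i : Fin n, i.val < m → (π i).val < m)
    (i : Fin n) (h : (π i).val < m) : i.val < m := by
  classical
  set A : Finset (Fin n) := Finset.univ.filter (fun j : Fin n => j.val < m) with hA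
  have himg : A.image π ⊆ A := by
    intro w hw
    obtain ⟨j, hj, hjw⟩ := Finset.mem_image.mp hw
    rw [hA, Finset.mem_filter] at hj ⊢
    exact ⟨Finset.mem_univ _, hjw ▸ hGA j hj.2⟩
  have hcard : A.card ≤ (A.image π).card := by
    rw [Finset.card_image_of_injective A π.injective]
  have heq : A.image π = A := Finset.eq_of_subset_of_card_le himg hcard
  have hπi : π i ∈ A := by
    rw [hA, Finset.mem_filter]; exact ⟨Finset.mem_univ _, h⟩
  rw [← heq] at hπi
  obtain ⟨j, hj, hji⟩ := Finset.mem_image.mp hπi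
  have : j = i := π.injective hji
  subst this
  rw [hA, Finset.mem_filter] at hj
  exact hj.2

lemma runBotVal_inj_on_RT {t1 t2 : Fin n} (h1 : t1 ∈ RT π) (h2 : t2 ∈ RT π)
    (heq : runBotVal π t1 = runBotVal π t2) : t1 = t2 := by
  have e1 : runTopVal π t1 = t1 := (mem_RT_iff π t1).mp h1
  have e2 : runTopVal π t2 = t2 := (mem_RT_iff π t2).mp h2
  calc t1 = runTopVal π t1 := e1.symm
    _ = runTopVal π (runBotVal π t1) := (runTopVal_runBotVal π t1).symm
    _ = runTopVal π (runBotVal π t2) := by rw [heq]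
    _ = runTopVal π t2 := runTopVal_runBotVal π t2
    _ = t2 := e2

/-- Under a global ascent at `m`, run tops below `m` biject with run bottoms below `m`. -/
lemma RT_RB_card_of_GA (m : ℕ) (hGA : ∀ i : Fin n, i.val < m → (π i).val < m) :
    ((RT π).filter fun v => v.val < m).card = ((RB π).filter fun v => v.val < m).card := by
  classical
  apply Finset.card_bij (fun t _ => runBotVal π t)
  · intro t ht
    rw [Finset.mem_filter] at ht ⊢
    refine ⟨runBotVal_mem_RB π t, ?_⟩
    have h2 : (runBotVal π t).val ≤ t.val := runBotVal_le π t
    omega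
  · intro t1 ht1 t2 ht2 heq
    exact runBotVal_inj_on_RT π (Finset.mem_filter.mp ht1).1 (Finset.mem_filter.mp ht2).1 heq
  · intro w hw
    rw [Finset.mem_filter] at hw
    refine ⟨runTopVal π w, ?_, ?_⟩
    · rw [Finset.mem_filter]
      refine ⟨runTopVal_mem_RT π w, ?_⟩
      have hpv : ((π : Equiv.Perm (Fin n)) (π.symm w)).val < m := by
        rw [Equiv.apply_symm_apply]; exact hw.2
      have hpos : (π.symm w).val < m := ga_pos_of_val π m hGA _ hpv
      have hsp : (runStartPos π (π.symm w)).val ≤ (π.symm w).val :=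
        runStartPos_le π (π.symm w)
      have : runTopVal π w = π (runStartPos π (π.symm w)) := rfl
      rw [this]
      exact hGA _ (by omega)
    · rw [runBotVal_runTopVal]
      exact (mem_RB_iff π w).mp hw.1

lemma card_val_lt (m : ℕ) (hm : m ≤ n) :
    (Finset.univ.filter fun w : Fin n => w.val < m).card = m := by
  classical
  have h : (Finset.univ.filter fun w : Fin n => w.val < m)
      = (Finset.range m).attachFin
        (fun a ha => lt_of_lt_of_le (Finset.mem_range.mp ha) hm) := by
    ext w
    simp [Finset.mem_attachFin, Finset.mem_range]
  rw [h, Finset.card_attachFin, Finset.card_range]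

lemma card_val_preimage_lt (m : ℕ) (hm : m ≤ n) :
    (Finset.univ.filter fun j : Fin n => (π j).val < m).card = m := by
  classical
  have hbij : (Finset.univ.filter fun j : Fin n => (π j).val < m).card
      = (Finset.univ.filter fun w : Fin n => w.val < m).card := by
    apply Finset.card_bij (fun j _ => π j)
    · intro j hj
      rw [Finset.mem_filter] at hj ⊢
      exact ⟨Finset.mem_univ _, hj.2⟩
    · intro j1 _ j2 _ h
      exact π.injective h
    · intro w hw
      rw [Finset.mem_filter] at hw
      refine ⟨π.symm w, ?_, Equiv.apply_symm_apply π w⟩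
      rw [Finset.mem_filter, Equiv.apply_symm_apply]
      exact ⟨Finset.mem_univ _, hw.2⟩
  rw [hbij, card_val_lt (n := n) m hm]

/-- If the numbers of run tops and run bottoms below `m` agree, then `m` is a
global ascent of `π`. -/
lemma GA_of_card (m : ℕ) (hm : m ≤ n)
    (hcard : ((RT π).filter fun v => v.val < m).card
      = ((RB π).filter fun v => v.val < m).card) :
    ∀ i : Fin n, i.val < m → (π i).val < m := by
  classical
  by_contra hno
  push_neg at hno
  obtain ⟨i₀, hi₀m, hπi₀⟩ := hno
  -- there is a position after i₀ holding a value < m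
  set A : Finset (Fin n) := Finset.univ.filter (fun j : Fin n => (π j).val < m ∧ i₀ < j)
    with hAdef
  have hAne : A.Nonempty := by
    by_contra hA
    rw [Finset.not_nonempty_iff_eq_empty] at hA
    have hsub : (Finset.univ.filter fun j : Fin n => (π j).val < m)
        ⊆ (Finset.univ.filter fun j : Fin n => j.val < i₀.val + 1).erase i₀ := by
      intro j hj
      rw [Finset.mem_filter] at hj
      have hji : ¬ i₀ < j := by
        intro hlt
        have hjA : j ∈ A := by
          rw [hAdef, Finset.mem_filter]; exact ⟨Finset.mem_univ _, hj.2, hlt⟩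
        rw [hA] at hjA
        exact absurd hjA (Finset.notMem_empty j)
      have hne : j ≠ i₀ := by
        intro h; rw [h] at hj; omega
      refine Finset.mem_erase.mpr ⟨hne, Finset.mem_filter.mpr ⟨Finset.mem_univ _, ?_⟩⟩
      have : j.val ≤ i₀.val := not_lt.mp hji
      omega
    have hc1 := Finset.card_le_card hsub
    rw [card_val_preimage_lt π m hm] at hc1
    have hc2 : ((Finset.univ.filter fun j : Fin n => j.val < i₀.val + 1).erase i₀).card
        = i₀.val := by
      rw [Finset.card_erase_of_mem (Finset.mem_filter.mpr ⟨Finset.mem_univ _, by omega⟩),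
        card_val_lt (n := n) (i₀.val + 1) i₀.isLt]
      omega
    omega
  set j₀ : Fin n := A.min' hAne with hj₀def
  have hj₀mem : j₀ ∈ A := A.min'_mem hAne
  rw [hAdef, Finset.mem_filter] at hj₀mem
  obtain ⟨-, hπj₀, hi₀j₀⟩ := hj₀mem
  have hi₀j₀' : i₀.val < j₀.val := hi₀j₀
  set j₁ : Fin n := ⟨j₀.val - 1, by omega⟩ with hj₁def
  have hπj₁ : m ≤ (π j₁).val := by
    rcases eq_or_ne j₁ i₀ with h | h
    · rw [h]; exact hπi₀
    · by_contra hlt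
      push_neg at hlt
      have hij₁ : i₀ < j₁ := by
        have h1 : i₀.val ≤ j₀.val - 1 := by omega
        have h2 : i₀.val ≠ j₁.val := fun hh => h (Fin.ext hh.symm)
        have h3 : j₁.val = j₀.val - 1 := rfl
        exact Fin.lt_def.mpr (by omega)
      have hj₁A : j₁ ∈ A := by
        rw [hAdef, Finset.mem_filter]; exact ⟨Finset.mem_univ _, hlt, hij₁⟩
      have := A.min'_le _ hj₁A
      rw [← hj₀def] at this
      have h4 : j₀.val ≤ j₁.val := this
      have h5 : j₁.val = j₀.val - 1 := rfl
      omega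
  have hdesc : IsDesc π j₁.val := by
    have hkk : j₁.val + 1 < n := by
      have : j₁.val = j₀.val - 1 := rfl
      have := j₀.isLt
      omega
    refine ⟨hkk, ?_⟩
    have he1 : (⟨j₁.val + 1, hkk⟩ : Fin n) = j₀ := Fin.ext (by
      show j₁.val + 1 = j₀.val
      have : j₁.val = j₀.val - 1 := rfl
      omega)
    have he2 : (⟨j₁.val, Nat.lt_of_succ_lt hkk⟩ : Fin n) = j₁ := Fin.ext rfl
    rw [he1, he2]
    exact Fin.lt_def.mpr (by omega)
  have hrun : SameRunLe π j₁ j₀ := by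
    have := sameRunLe_of_desc π hdesc.choose hdesc
    have he1 : (⟨j₁.val + 1, hdesc.choose⟩ : Fin n) = j₀ := Fin.ext (by
      show j₁.val + 1 = j₀.val
      have : j₁.val = j₀.val - 1 := rfl
      omega)
    rwa [he1] at this
  set w : Fin n := runBotVal π (π j₀) with hwdef
  have hwRB : w ∈ RB π := runBotVal_mem_RB π (π j₀)
  have hwm : w.val < m := by
    have h1 : (runBotVal π (π j₀)).val ≤ (π j₀).val := runBotVal_le π (π j₀)
    omega
  have htop : m ≤ (runTopVal π w).val := by
    have e1 : runTopVal π w = runTopVal π (π j₀) := runTopVal_runBotVal π (π j₀)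
    have e2 : runTopVal π (π j₀) = π (runStartPos π (π.symm (π j₀))) := rfl
    rw [e1, e2, Equiv.symm_apply_apply]
    have e3 : runStartPos π j₀ = runStartPos π j₁ := runStartPos_eq π hrun
    rw [e3]
    have h4 : π j₁ ≤ π (runStartPos π j₁) := pi_le_of_sameRun π (sameRunLe_runStartPos π j₁)
    have h5 : (π j₁).val ≤ (π (runStartPos π j₁)).val := h4
    omega
  -- injection from run tops < m into run bottoms < m avoiding w
  have hinj : ((RT π).filter fun v => v.val < m).card
      ≤ (((RB π).filter fun v => v.val < m).erase w).card := by
    apply Finset.card_le_card_of_injOn (fun t => runBotVal π t)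
    · intro t ht
      simp only [Finset.mem_coe] at ht ⊢
      rw [Finset.mem_filter] at ht
      refine Finset.mem_erase.mpr ⟨?_, Finset.mem_filter.mpr
        ⟨runBotVal_mem_RB π t, by
          have h2 : (runBotVal π t).val ≤ t.val := runBotVal_le π t
          omega⟩⟩
      intro hEq
      have e1 : runTopVal π t = t := (mem_RT_iff π t).mp ht.1
      have : t = runTopVal π w := by
        rw [← hEq, runTopVal_runBotVal, e1]
      rw [this] at ht
      omega
    · intro t1 ht1 t2 ht2 heq
      simp only [Finset.coe_filter, Set.mem_setOf_eq] at ht1 ht2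
      exact runBotVal_inj_on_RT π ht1.1 ht2.1 heq
  have hwmem : w ∈ (RB π).filter fun v => v.val < m :=
    Finset.mem_filter.mpr ⟨hwRB, hwm⟩
  rw [Finset.card_erase_of_mem hwmem] at hinj
  have hpos : 0 < ((RB π).filter fun v => v.val < m).card :=
    Finset.card_pos.mpr ⟨w, hwmem⟩
  omega

/-- Under a global ascent at `m`, the number of descent views equal to `v < m` is at most
the number of non-run-bottoms strictly between `v` and `m`. -/
lemma dv_bound (m : ℕ) (hGA : ∀ i : Fin n, i.val < m → (π i).val < m)
    (v : Fin n) (hv : v ∉ RB π) (hvm : v.val < m) :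
    Multiset.count v (dvNotRB π)
      ≤ ((Finset.univ.filter fun w : Fin n => w ∉ RB π).filter
          fun w => v < w ∧ w.val < m).card := by
  classical
  have h1 : Multiset.count v (dvNotRB π) = Multiset.count v (dvM π) := by
    unfold dvNotRB
    exact Multiset.count_filter_of_pos hv
  rw [h1]
  unfold dvM
  rw [Multiset.count_map]
  have h2 : Multiset.card (Multiset.filter (fun p => v = π p.2) (Pat31s2 π).val)
      = ((Pat31s2 π).filter fun p => v = π p.2).card := by
    rw [← Finset.filter_val]
    rfl
  rw [h2]
  apply Finset.card_le_card_of_injOn (fun p => π p.1)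
  · intro p hp
    simp only [Finset.mem_coe] at hp ⊢
    rw [Finset.mem_filter] at hp
    obtain ⟨hpat, hpv⟩ := hp
    unfold Pat31s2 at hpat
    rw [Finset.mem_filter] at hpat
    obtain ⟨-, hn1, hlt12, hba, hb2, -⟩ := hpat
    have hdesc : IsDesc π p.1.val := by
      refine ⟨hn1, ?_⟩
      have he : (⟨p.1.val, Nat.lt_of_succ_lt hn1⟩ : Fin n) = p.1 := Fin.ext rfl
      rw [he]
      exact lt_trans hb2 hba
    have hp2m : p.2.val < m := by
      apply ga_pos_of_val π m hGA
      rw [← hpv]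
      exact hvm
    have hp1m : p.1.val < m := by omega
    rw [Finset.mem_filter, Finset.mem_filter]
    refine ⟨⟨Finset.mem_univ _, not_mem_RB_of_desc π hdesc⟩, ?_, hGA _ hp1m⟩
    rw [hpv]
    exact hba
  · intro p hp q hq heq
    simp only [Finset.coe_filter, Set.mem_setOf_eq] at hp hq
    have h1 : p.1 = q.1 := π.injective heq
    have h2 : p.2 = q.2 := π.injective (by rw [← hp.2, ← hq.2])
    exact Prod.ext h1 h2

lemma count_invBottomsE (f : {x : Fin n // x ∉ RT π} ≃ {x : Fin n // x ∉ RB π})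
    (y : {x : Fin n // x ∉ RT π}) :
    Multiset.count ((f y : Fin n)) (invBottomsE π f)
      = (Finset.univ.filter fun x : {x : Fin n // x ∉ RT π} =>
          (x : Fin n) < (y : Fin n) ∧ (f y : Fin n) < (f x : Fin n)).card := by
  classical
  unfold invBottomsE
  rw [Multiset.count_map]
  have h2 : Multiset.card (Multiset.filter (fun p => (f y : Fin n) = (f p.2 : Fin n))
        ((Finset.univ : Finset ({x : Fin n // x ∉ RT π} × {x : Fin n // x ∉ RT π})).filter
          fun p => (p.1 : Fin n) < (p.2 : Fin n) ∧ (f p.2 : Fin n) < (f p.1 : Fin n)).val)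
      = (((Finset.univ : Finset ({x : Fin n // x ∉ RT π} × {x : Fin n // x ∉ RT π})).filter
          fun p => (p.1 : Fin n) < (p.2 : Fin n) ∧ (f p.2 : Fin n) < (f p.1 : Fin n)).filter
          fun p => (f y : Fin n) = (f p.2 : Fin n)).card := by
    rw [← Finset.filter_val]
    rfl
  rw [h2]
  apply Finset.card_bij (fun p _ => p.1)
  · intro p hp
    rw [Finset.mem_filter, Finset.mem_filter] at hp
    obtain ⟨⟨-, h1, h2⟩, h3⟩ := hp
    have hp2y : p.2 = y := f.injective (Subtype.coe_injective h3.symm)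
    rw [Finset.mem_filter]
    rw [hp2y] at h1 h2
    exact ⟨Finset.mem_univ _, h1, h2⟩
  · intro p hp q hq heq
    rw [Finset.mem_filter, Finset.mem_filter] at hp hq
    have hp2y : p.2 = y := f.injective (Subtype.coe_injective hp.2.symm)
    have hq2y : q.2 = y := f.injective (Subtype.coe_injective hq.2.symm)
    exact Prod.ext heq (hp2y.trans hq2y.symm)
  · intro x hx
    rw [Finset.mem_filter] at hx
    refine ⟨(x, y), ?_, rfl⟩
    rw [Finset.mem_filter, Finset.mem_filter]
    exact ⟨⟨Finset.mem_univ _, hx.2.1, hx.2.2⟩, rfl⟩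

/-- Abstract lemma: a bijection whose inversion-bottom multiset is "small enough below `m`"
maps elements below `m` to values below `m`. -/
lemma blockLemma (m : ℕ) :
    ∀ (c : ℕ) (S T : Finset (Fin n)) (F : Fin n → Fin n),
      Set.InjOn F S → S.image F = T →
      (S.filter fun x => x.val < m).card = (T.filter fun v => v.val < m).card →
      (T.filter fun v => v.val < m).card = c →
      (∀ y ∈ S, (F y).val < m →
        (S.filter fun x => x < y ∧ F y < F x).card
          ≤ (T.filter fun w => F y < w ∧ w.val < m).card) →
      ∀ x ∈ S, x.val < m → (F x).val < m := by
  classical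
  intro c
  induction c with
  | zero =>
    intro S T F _ _ hk hc _ x hx hxm
    rw [hc] at hk
    have hmem : x ∈ S.filter fun x => x.val < m := Finset.mem_filter.mpr ⟨hx, hxm⟩
    rw [Finset.card_eq_zero] at hk
    rw [hk] at hmem
    exact absurd hmem (Finset.notMem_empty x)
  | succ c ih =>
    intro S T F hinj himg hk hc hH
    have hTfne : (T.filter fun v => v.val < m).Nonempty := by
      rw [← Finset.card_pos, hc]; omega
    obtain ⟨u, hu⟩ := hTfne
    have hTne : T.Nonempty := ⟨u, (Finset.mem_filter.mp hu).1⟩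
    set v₀ := T.min' hTne with hv₀
    have hv₀T : v₀ ∈ T := T.min'_mem hTne
    have hv₀m : v₀.val < m := by
      have h1 : v₀.val ≤ u.val := T.min'_le u (Finset.mem_filter.mp hu).1
      have h2 := (Finset.mem_filter.mp hu).2
      omega
    have hv₀img : v₀ ∈ S.image F := by rw [himg]; exact hv₀T
    obtain ⟨y₀, hy₀S, hy₀⟩ := Finset.mem_image.mp hv₀img
    have hfeq : (S.filter fun x => x < y₀ ∧ F y₀ < F x) = S.filter fun x => x < y₀ := by
      ext x
      simp only [Finset.mem_filter]
      constructor
      · rintro ⟨h1, h2, -⟩; exact ⟨h1, h2⟩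
      · rintro ⟨h1, h2⟩
        refine ⟨h1, h2, ?_⟩
        rw [hy₀]
        have hFx : F x ∈ T := by rw [← himg]; exact Finset.mem_image_of_mem F h1
        have hne : F x ≠ v₀ := by
          intro h
          have hxy : x = y₀ := hinj h1 hy₀S (by rw [h, hy₀])
          rw [hxy] at h2; exact lt_irrefl _ h2
        exact lt_of_le_of_ne (T.min'_le _ hFx) (Ne.symm hne)
    have herase : (T.filter fun w => F y₀ < w ∧ w.val < m)
        = (T.filter fun w => w.val < m).erase v₀ := by
      ext w
      simp only [Finset.mem_filter, Finset.mem_erase]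
      constructor
      · rintro ⟨hwT, hlt, hwm⟩
        refine ⟨?_, hwT, hwm⟩
        intro h; rw [h, hy₀] at hlt; exact lt_irrefl _ hlt
      · rintro ⟨hne, hwT, hwm⟩
        exact ⟨hwT, by rw [hy₀]; exact lt_of_le_of_ne (T.min'_le _ hwT) (Ne.symm hne), hwm⟩
    have hcnt : (S.filter fun x => x < y₀).card ≤ c := by
      have hb := hH y₀ hy₀S (by rw [hy₀]; exact hv₀m)
      rw [hfeq, herase,
        Finset.card_erase_of_mem (Finset.mem_filter.mpr ⟨hv₀T, hv₀m⟩), hc] at hb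
      omega
    have hy₀m : y₀.val < m := by
      by_contra hge
      push_neg at hge
      have hsub : (S.filter fun x => x.val < m) ⊆ S.filter fun x => x < y₀ := by
        intro x hx
        rw [Finset.mem_filter] at hx ⊢
        exact ⟨hx.1, Fin.lt_def.mpr (by omega)⟩
      have hcc := Finset.card_le_card hsub
      rw [hk, hc] at hcc
      omega
    have himg' : (S.erase y₀).image F = T.erase v₀ := by
      ext w
      simp only [Finset.mem_image, Finset.mem_erase]
      constructor
      · rintro ⟨x, ⟨hxne, hxS⟩, hxw⟩
        refine ⟨?_, ?_⟩
        · intro h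
          have hxy : x = y₀ := hinj hxS hy₀S (by rw [hxw, h, hy₀])
          exact hxne hxy
        · rw [← himg]; exact Finset.mem_image.mpr ⟨x, hxS, hxw⟩
      · rintro ⟨hwne, hwT⟩
        rw [← himg] at hwT
        obtain ⟨x, hxS, hxw⟩ := Finset.mem_image.mp hwT
        refine ⟨x, ⟨?_, hxS⟩, hxw⟩
        intro h; rw [h, hy₀] at hxw; exact hwne hxw.symm
    have hSk : ((S.erase y₀).filter fun x => x.val < m).card = c := by
      rw [Finset.filter_erase,
        Finset.card_erase_of_mem (Finset.mem_filter.mpr ⟨hy₀S, hy₀m⟩), hk, hc]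
      omega
    have hTk : ((T.erase v₀).filter fun v => v.val < m).card = c := by
      rw [Finset.filter_erase,
        Finset.card_erase_of_mem (Finset.mem_filter.mpr ⟨hv₀T, hv₀m⟩), hc]
      omega
    have hmain := ih (S.erase y₀) (T.erase v₀) F
      (hinj.mono (Finset.coe_subset.mpr (Finset.erase_subset _ _)))
      himg' (by rw [hSk, hTk]) hTk
      (by
        intro y hyS' hym
        have hyS : y ∈ S := Finset.mem_of_mem_erase hyS'
        have hbound := hH y hyS hym
        have hsub : (S.erase y₀).filter (fun x => x < y ∧ F y < F x)
            ⊆ S.filter (fun x => x < y ∧ F y < F x) := by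
          intro x hx
          rw [Finset.mem_filter] at hx ⊢
          exact ⟨Finset.mem_of_mem_erase hx.1, hx.2⟩
        have h1 := Finset.card_le_card hsub
        have heq2 : (T.erase v₀).filter (fun w => F y < w ∧ w.val < m)
            = T.filter (fun w => F y < w ∧ w.val < m) := by
          rw [Finset.filter_erase]
          apply Finset.erase_eq_of_notMem
          intro hmem
          rw [Finset.mem_filter] at hmem
          have hFy : F y ∈ T := by rw [← himg]; exact Finset.mem_image_of_mem F hyS
          have := T.min'_le _ hFy
          rw [← hv₀] at this
          exact absurd hmem.2.1 (not_lt.mpr this)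
        rw [heq2]
        exact le_trans h1 hbound)
    intro x hxS hxm
    rcases eq_or_ne x y₀ with h | h
    · rw [h, hy₀]; exact hv₀m
    · exact hmain x (Finset.mem_erase.mpr ⟨h, hxS⟩) hxm

end Stmt7Aux

/-- any permutation agreeing with `χ_e(π)` on the complement of the run
tops whose other values are weak deficiencies has the same global ascents as `π`. -/

theorem stmt7 (n : ℕ) (π σ : Equiv.Perm (Fin n))
    (f : {x : Fin n // x ∉ RT π} ≃ {x : Fin n // x ∉ RB π}) (hf : IsChiE π f)
    (hagree : ∀ x : Fin n, ∀ hx : x ∉ RT π, σ x = (f ⟨x, hx⟩ : Fin n))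
    (hdef : ∀ i : Fin n, i ∈ RT π → σ i ≤ i) :
    globalAscents π = globalAscents σ := by
  
  classical
  set S : Finset (Fin n) := Finset.univ.filter (fun x : Fin n => x ∉ RT π) with hS
  set T : Finset (Fin n) := Finset.univ.filter (fun x : Fin n => x ∉ RB π) with hT
  have himg : S.image σ = T := by
    ext w
    simp only [hS, hT, Finset.mem_image, Finset.mem_filter, Finset.mem_univ, true_and]
    constructor
    · rintro ⟨x, hx, hxw⟩
      rw [hagree x hx] at hxw
      rw [← hxw]
      exact (f ⟨x, hx⟩).2
    · intro hw
      refine ⟨(f.symm ⟨w, hw⟩ : Fin n), (f.symm ⟨w, hw⟩).2, ?_⟩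
      rw [hagree _ (f.symm ⟨w, hw⟩).2, Subtype.coe_eta, Equiv.apply_symm_apply]
  have hsplitS : ∀ m : ℕ,
      ((RT π).filter fun v => v.val < m).card + (S.filter fun x => x.val < m).card
        = (Finset.univ.filter fun x : Fin n => x.val < m).card := by
    intro m
    have h1 : (RT π).filter (fun v => v.val < m)
        = (Finset.univ.filter fun x : Fin n => x.val < m).filter (fun x => x ∈ RT π) := by
      ext x
      simp only [Finset.mem_filter, Finset.mem_univ, true_and]
      tauto
    have h2 : S.filter (fun x => x.val < m)
        = (Finset.univ.filter fun x : Fin n => x.val < m).filter (fun x => x ∉ RT π) := by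
      ext x
      simp only [hS, Finset.mem_filter, Finset.mem_univ, true_and]
      tauto
    rw [h1, h2, Finset.card_filter_add_card_filter_not]
  have hsplitT : ∀ m : ℕ,
      ((RB π).filter fun v => v.val < m).card + (T.filter fun x => x.val < m).card
        = (Finset.univ.filter fun x : Fin n => x.val < m).card := by
    intro m
    have h1 : (RB π).filter (fun v => v.val < m)
        = (Finset.univ.filter fun x : Fin n => x.val < m).filter (fun x => x ∈ RB π) := by
      ext x
      simp only [Finset.mem_filter, Finset.mem_univ, true_and]
      tauto
    have h2 : T.filter (fun x => x.val < m)
        = (Finset.univ.filter fun x : Fin n => x.val < m).filter (fun x => x ∉ RB π) := by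
      ext x
      simp only [hT, Finset.mem_filter, Finset.mem_univ, true_and]
      tauto
    rw [h1, h2, Finset.card_filter_add_card_filter_not]
  ext m
  simp only [globalAscents, Finset.mem_filter, Finset.mem_Icc]
  constructor
  · rintro ⟨hm, hGA⟩
    refine ⟨hm, ?_⟩
    have hRTRB := Stmt7Aux.RT_RB_card_of_GA π m hGA
    have hk : (S.filter fun x => x.val < m).card = (T.filter fun v => v.val < m).card := by
      have h1 := hsplitS m
      have h2 := hsplitT m
      omega
    have hH : ∀ y ∈ S, (σ y).val < m →
        (S.filter fun x => x < y ∧ σ y < σ x).card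
          ≤ (T.filter fun w => σ y < w ∧ w.val < m).card := by
      intro y hyS hym
      have hyRT : y ∉ RT π := by
        rw [hS, Finset.mem_filter] at hyS
        exact hyS.2
      have hσy : σ y = (f ⟨y, hyRT⟩ : Fin n) := hagree y hyRT
      have hcount : (S.filter fun x => x < y ∧ σ y < σ x).card
          = Multiset.count ((f ⟨y, hyRT⟩ : Fin n)) (invBottomsE π f) := by
        rw [Stmt7Aux.count_invBottomsE]
        apply Finset.card_bij (fun x hx => (⟨x, by
          have hx1 := (Finset.mem_filter.mp hx).1
          rw [hS, Finset.mem_filter] at hx1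
          exact hx1.2⟩ : {x : Fin n // x ∉ RT π}))
        · intro x hx
          have hx' := Finset.mem_filter.mp hx
          have hx1 := hx'.1
          rw [hS, Finset.mem_filter] at hx1
          rw [Finset.mem_filter]
          refine ⟨Finset.mem_univ _, hx'.2.1, ?_⟩
          have hσx : σ x = (f ⟨x, hx1.2⟩ : Fin n) := hagree x hx1.2
          rw [← hσx, ← hσy]
          exact hx'.2.2
        · intro x1 hx1 x2 hx2 heq
          exact congrArg Subtype.val heq
        · intro b hb
          rw [Finset.mem_filter] at hb
          refine ⟨(b : Fin n), ?_, ?_⟩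
          · rw [Finset.mem_filter]
            refine ⟨?_, hb.2.1, ?_⟩
            · rw [hS, Finset.mem_filter]
              exact ⟨Finset.mem_univ _, b.2⟩
            · have hσb : σ (b : Fin n) = (f ⟨(b : Fin n), b.2⟩ : Fin n) := hagree _ b.2
              rw [hσb, hσy, Subtype.coe_eta]
              exact hb.2.2
          · exact Subtype.ext rfl
      rw [hcount, hf]
      have hfy : (f ⟨y, hyRT⟩ : Fin n) ∉ RB π := (f ⟨y, hyRT⟩).2
      have hfym : ((f ⟨y, hyRT⟩ : Fin n)).val < m := by
        rw [← hσy]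
        exact hym
      have hb := Stmt7Aux.dv_bound π m hGA _ hfy hfym
      rw [hσy, hT]
      exact hb
    intro i him
    by_cases hiRT : i ∈ RT π
    · have h1 : (σ i).val ≤ i.val := hdef i hiRT
      omega
    · have hiS : i ∈ S := by
        rw [hS, Finset.mem_filter]
        exact ⟨Finset.mem_univ _, hiRT⟩
      exact Stmt7Aux.blockLemma m ((T.filter fun v => v.val < m).card) S T σ
        (fun a _ b _ h => σ.injective h) himg hk rfl hH i hiS him
  · rintro ⟨hm, hGAσ⟩
    refine ⟨hm, ?_⟩
    have hk1 : (S.filter fun x => x.val < m).card ≤ (T.filter fun v => v.val < m).card := by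
      apply Finset.card_le_card_of_injOn σ
      · intro x hx
        simp only [Finset.mem_coe] at hx ⊢
        rw [Finset.mem_filter] at hx ⊢
        refine ⟨?_, hGAσ x hx.2⟩
        rw [← himg]
        exact Finset.mem_image_of_mem σ hx.1
      · intro a _ b _ h
        exact σ.injective h
    have hk2 : ((RT π).filter fun v => v.val < m).card
        ≤ ((RB π).filter fun v => v.val < m).card := by
      apply Finset.card_le_card_of_injOn (fun t => runBotVal π t)
      · intro t ht
        simp only [Finset.mem_coe] at ht ⊢
        rw [Finset.mem_filter] at ht ⊢
        refine ⟨Stmt7Aux.runBotVal_mem_RB π t, ?_⟩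
        have h2 : (runBotVal π t).val ≤ t.val := Stmt7Aux.runBotVal_le π t
        omega
      · intro t1 ht1 t2 ht2 h
        simp only [Finset.coe_filter, Set.mem_setOf_eq] at ht1 ht2
        exact Stmt7Aux.runBotVal_inj_on_RT π ht1.1 ht2.1 h
    have hcard : ((RT π).filter fun v => v.val < m).card
        = ((RB π).filter fun v => v.val < m).card := by
      have h1 := hsplitS m
      have h2 := hsplitT m
      omega
    exact Stmt7Aux.GA_of_card π m hm.2 hcard
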